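/- Let n ≥ 1, let A : Matrix (Fin n) (Fin n) ℂ have entries A i j = 0 if i = j and 1 otherwise, and define P : Fin n → Fin n → ℝ by P i j = (1/(2π)) ∫_{β=0}^{2π} ‖(exp(−(i β) • A)) j i‖² dβ. Then: (1) every entry of P is strictly positive; (2) for every i, Σ_j P i j = 1 and for every j, Σ_i P i j = 1 (P is doubly stochastic); (3) the uniform distribution π* = (1/n, …, 1/n) is stationary for P, i.e. Σ_i (1/n) P i j = 1/n for every j. -/

import Mathlib

open Matrix

private noncomputable def Jm (n : ℕ) : Matrix (Fin n) (Fin n) ℂ := Matrix.of fun _ _ => 1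

private lemma Jm_mul (n : ℕ) : Jm n * Jm n = (n : ℂ) • Jm n := by
  ext i j
  simp [Jm, Matrix.mul_apply]

private lemma Jm_pow (n : ℕ) (k : ℕ) : Jm n ^ (k + 1) = ((n : ℂ) ^ k) • Jm n := by
  induction k with
  | zero => simp
  | succ k ih =>
    rw [pow_succ, ih, Matrix.smul_mul, Jm_mul, smul_smul, pow_succ]

private lemma expJ {n : ℕ} (hn : 1 ≤ n) (c : ℂ) :
    NormedSpace.exp (c • Jm n) =
      (1 : Matrix (Fin n) (Fin n) ℂ) + ((Complex.exp (c * n) - 1) / n) • Jm n := by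
  have hn0 : (n : ℂ) ≠ 0 := Nat.cast_ne_zero.mpr (by omega)
  rw [NormedSpace.exp_eq_tsum ℂ]
  refine HasSum.tsum_eq ?_
  refine Pi.hasSum.mpr fun i => Pi.hasSum.mpr fun j => ?_
  have hB : ((1 : Matrix (Fin n) (Fin n) ℂ) + ((Complex.exp (c * n) - 1) / n) • Jm n) i j
      = (if i = j then 1 else 0) + (Complex.exp (c * n) - 1) / n := by
    simp [Jm, Matrix.one_apply]
  rw [hB]
  have hg : HasSum (fun k : ℕ => (c * n) ^ k / (Nat.factorial k : ℂ) / n)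
      (Complex.exp (c * n) / n) := by
    simpa [Complex.exp_eq_exp_ℂ] using
      (NormedSpace.expSeries_div_hasSum_exp (c * n)).div_const (n : ℂ)
  have hupd := hg.update 0 (if i = j then (1:ℂ) else 0)
  have hfun : Function.update (fun k : ℕ => (c * n) ^ k / (Nat.factorial k : ℂ) / n) 0
      (if i = j then (1:ℂ) else 0)
      = fun k : ℕ => (Nat.factorial k : ℂ)⁻¹ • ((c • Jm n) ^ k) i j := by
    funext k
    cases k with
    | zero => simp [Matrix.one_apply]
    | succ m =>
      rw [Function.update_of_ne (Nat.succ_ne_zero m)]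
      rw [smul_pow, Jm_pow]
      simp only [Jm, Matrix.smul_apply, Matrix.of_apply, smul_eq_mul, mul_one]
      rw [mul_pow, pow_succ (n:ℂ) m, div_div, inv_mul_eq_div, div_eq_div_iff
        (mul_ne_zero (Nat.cast_ne_zero.mpr (Nat.factorial_ne_zero _)) hn0)
        (Nat.cast_ne_zero.mpr (Nat.factorial_ne_zero _))]
      simp only [Nat.succ_eq_add_one]
      ring
  rw [hfun] at hupd
  convert hupd using 1
  · rfl
  · rfl
  simp only [pow_zero, Nat.factorial_zero, Nat.cast_one, div_one, one_div]
  ring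

private lemma expA {n : ℕ} (hn : 1 ≤ n) (A : Matrix (Fin n) (Fin n) ℂ)
    (hA : ∀ i j, A i j = if i = j then 0 else 1) (c : ℂ) (j i : Fin n) :
    (NormedSpace.exp (c • A)) j i
      = Complex.exp (-c) * ((if j = i then 1 else 0) + (Complex.exp (c * n) - 1) / n) := by
  have hAe : A = Jm n - 1 := by
    ext a b
    by_cases h : a = b <;> simp [hA, Jm, Matrix.one_apply, h]
  have hsplit : c • A = c • Jm n + (-c) • (1 : Matrix (Fin n) (Fin n) ℂ) := by
    rw [hAe, smul_sub]
    module
  have hdiag : (-c) • (1 : Matrix (Fin n) (Fin n) ℂ)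
      = Matrix.diagonal (fun _ => -c) := by
    ext a b
    by_cases h : a = b <;> simp [Matrix.one_apply, Matrix.diagonal_apply, h]
  have hcomm : Commute (c • Jm n) ((-c) • (1 : Matrix (Fin n) (Fin n) ℂ)) :=
    ((Commute.one_right (c • Jm n)).smul_right (-c))
  have hsum := Matrix.exp_add_of_commute (c • Jm n) ((-c) • 1) hcomm
  rw [hsplit, hsum, hdiag, Matrix.exp_diagonal, expJ hn c]
  have hexpfun : NormedSpace.exp (fun _ : Fin n => -c) = fun _ : Fin n => Complex.exp (-c) := by
    funext a
    rw [Complex.exp_eq_exp_ℂ]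
    exact Pi.coe_exp (fun _ : Fin n => -c) a
  rw [hexpfun]
  have : (((1 : Matrix (Fin n) (Fin n) ℂ) + ((Complex.exp (c * n) - 1) / n) • Jm n) *
      Matrix.diagonal fun _ : Fin n => Complex.exp (-c)) j i
      = ((if j = i then 1 else 0) + (Complex.exp (c * n) - 1) / n) * Complex.exp (-c) := by
    rw [Matrix.mul_diagonal]
    simp [Jm, Matrix.one_apply]
  rw [this]
  ring

private lemma normEntry {n : ℕ} (hn : 1 ≤ n) (A : Matrix (Fin n) (Fin n) ℂ)
    (hA : ∀ i j, A i j = if i = j then 0 else 1) (β : ℝ) (j i : Fin n) :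
    ‖(NormedSpace.exp ((-(Complex.I * β)) • A)) j i‖ ^ 2
      = ((if j = i then ((n:ℝ)-1)^2+1 else 2)
          + (if j = i then 2*((n:ℝ)-1) else -2) * Real.cos (n*β)) / (n:ℝ)^2 := by
  have hn0 : (n:ℝ) ≠ 0 := by positivity
  rw [expA hn A hA]
  rw [norm_mul]
  have h1 : ‖Complex.exp (-(-(Complex.I * β)))‖ = 1 := by
    simp [Complex.norm_exp]
  rw [h1, one_mul]
  have hθ : (-(Complex.I * β)) * n = ((-(n*β) : ℝ)) * Complex.I := by push_cast; ring
  rw [hθ, Complex.exp_mul_I, ← Complex.ofReal_cos, ← Complex.ofReal_sin]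
  set θ : ℝ := -(n*β) with hθdef
  have hsc : Real.sin θ ^ 2 + Real.cos θ ^ 2 = 1 := Real.sin_sq_add_cos_sq θ
  by_cases h : j = i
  · simp only [h, if_true]
    have hz : (1 + ((↑(Real.cos θ) + ↑(Real.sin θ) * Complex.I) - 1) / (n:ℂ))
        = (↑((((n:ℝ)-1) + Real.cos θ)/n) + ↑(Real.sin θ / n) * Complex.I) := by
      have hn0c : (n:ℂ) ≠ 0 := by exact_mod_cast hn0
      push_cast
      field_simp
      ring
    rw [hz, Complex.sq_norm, Complex.normSq_add_mul_I]
    rw [hθdef, Real.cos_neg, Real.sin_neg]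
    field_simp
    nlinarith [Real.sin_sq_add_cos_sq (n*β)]
  · simp only [h, if_false]
    have hz : ((0:ℂ) + ((↑(Real.cos θ) + ↑(Real.sin θ) * Complex.I) - 1) / (n:ℂ))
        = (↑((Real.cos θ - 1)/n) + ↑(Real.sin θ / n) * Complex.I) := by
      have hn0c : (n:ℂ) ≠ 0 := by exact_mod_cast hn0
      push_cast
      field_simp
      ring
    rw [hz, Complex.sq_norm, Complex.normSq_add_mul_I]
    rw [hθdef, Real.cos_neg, Real.sin_neg]
    field_simp
    nlinarith [Real.sin_sq_add_cos_sq (n*β)]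

private lemma integral_avg {n : ℕ} (hn : 1 ≤ n) (a b : ℝ) :
    (1/(2*Real.pi)) * ∫ β in (0:ℝ)..(2*Real.pi), (a + b * Real.cos ((n:ℝ)*β))/ (n:ℝ)^2
      = a/(n:ℝ)^2 := by
  have hn0 : (n:ℝ) ≠ 0 := by positivity
  have hcos : (∫ β in (0:ℝ)..(2*Real.pi), Real.cos ((n:ℝ)*β)) = 0 := by
    rw [intervalIntegral.integral_comp_mul_left Real.cos hn0]
    rw [integral_cos]
    have h2 : (n:ℝ)*(2*Real.pi) = ((2*n : ℕ):ℝ)*Real.pi := by push_cast; ring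
    have h3 : Real.sin ((n:ℝ)*(2*Real.pi)) = 0 := by
      rw [h2]; exact Real.sin_nat_mul_pi (2*n)
    simp [h3]
  have hint : (∫ β in (0:ℝ)..(2*Real.pi), (a + b * Real.cos ((n:ℝ)*β))/ (n:ℝ)^2)
      = 2*Real.pi * (a/(n:ℝ)^2) := by
    have hcong : ∀ β : ℝ, (a + b * Real.cos ((n:ℝ)*β))/ (n:ℝ)^2
        = a/(n:ℝ)^2 + (b/(n:ℝ)^2) * Real.cos ((n:ℝ)*β) := by
      intro β; field_simp
    simp_rw [hcong]
    have hcont : Continuous fun β : ℝ => (b/(n:ℝ)^2) * Real.cos ((n:ℝ)*β) :=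
      continuous_const.mul (Real.continuous_cos.comp (continuous_const.mul continuous_id))
    rw [intervalIntegral.integral_add (intervalIntegrable_const)
      (hcont.intervalIntegrable _ _)]
    rw [intervalIntegral.integral_const_mul, hcos, intervalIntegral.integral_const]
    simp [mul_comm]
  rw [hint]
  have hpi : Real.pi ≠ 0 := Real.pi_ne_zero
  field_simp

/-- The angle-averaged XY mixer transition matrix `P` has strictly positive
entries, is doubly stochastic, and has the uniform distribution as a stationary
distribution. -/
theorem xy_mixer_transition_matrix_ergodic (n : ℕ) (hn : 1 ≤ n)
    (A : Matrix (Fin n) (Fin n) ℂ)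
    (hA : ∀ i j, A i j = if i = j then 0 else 1)
    (P : Fin n → Fin n → ℝ)
    (hP : ∀ i j, P i j = (1 / (2 * Real.pi)) * ∫ β in (0 : ℝ)..(2 * Real.pi),
        ‖(NormedSpace.exp ((-(Complex.I * β)) • A)) j i‖ ^ 2) :
    (∀ i j, 0 < P i j) ∧
    (∀ i, ∑ j, P i j = 1) ∧
    (∀ j, ∑ i, P i j = 1) ∧
    (∀ j, ∑ i, (1 / (n : ℝ)) * P i j = 1 / (n : ℝ)) := by
  have hn0 : (n:ℝ) ≠ 0 := by positivity
  have hPval : ∀ i j, P i j = (if i = j then ((n:ℝ)-1)^2+1 else 2)/(n:ℝ)^2 := by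
    intro i j
    rw [hP i j]
    have hcong : (∫ β in (0:ℝ)..(2*Real.pi),
        ‖(NormedSpace.exp ((-(Complex.I * β)) • A)) j i‖ ^ 2)
        = ∫ β in (0:ℝ)..(2*Real.pi),
          ((if j = i then ((n:ℝ)-1)^2+1 else 2)
            + (if j = i then 2*((n:ℝ)-1) else -2) * Real.cos ((n:ℝ)*β)) / (n:ℝ)^2 :=
      intervalIntegral.integral_congr (fun β _ => normEntry hn A hA β j i)
    rw [hcong, integral_avg hn]
    congr 1
    by_cases h : i = j <;> simp [h, eq_comm]
  have hrow : ∀ i, ∑ j, P i j = 1 := by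
    intro i
    have hsplit : ∀ j, P i j = 2/(n:ℝ)^2
        + (if i = j then (((n:ℝ)-1)^2+1)/(n:ℝ)^2 - 2/(n:ℝ)^2 else 0) := by
      intro j
      rw [hPval i j]
      split_ifs <;> ring
    simp_rw [hsplit]
    rw [Finset.sum_add_distrib, Finset.sum_const, Finset.sum_ite_eq, Finset.card_univ]
    simp only [Fintype.card_fin, Finset.mem_univ, if_true, nsmul_eq_mul]
    field_simp
    ring
  have hcol : ∀ j, ∑ i, P i j = 1 := by
    intro j
    have hPji : ∀ i, P i j = P j i := by
      intro i
      rw [hPval i j, hPval j i]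
      by_cases h : i = j
      · simp [h]
      · rw [if_neg h, if_neg (fun hji => h hji.symm)]
    simp_rw [hPji]
    exact hrow j
  refine ⟨?_, hrow, hcol, ?_⟩
  · intro i j
    rw [hPval i j]
    split_ifs with h
    · have : (0:ℝ) < ((n:ℝ)-1)^2+1 := by positivity
      positivity
    · positivity
  · intro j
    rw [← Finset.mul_sum, hcol j, mul_one]
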